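/- If f is a bounded analytic function on the right half-plane {z : Re z > 0} that vanishes at pairwise distinct points d₁, d₂, … with inf |dₙ| > 0 and ∑ₙ Re(1/dₙ) = ∞, then f vanishes identically on {z : Re z > 0}. -/

import Mathlib

open Complex Metric Set Finset Filter

lemma normsq_key (z d : ℂ) :
    ‖z + (starRingEnd ℂ) d‖ ^ 2 = ‖z - d‖ ^ 2 + 4 * z.re * d.re := by
  simp only [Complex.sq_norm, Complex.normSq_apply, Complex.add_re,
    Complex.add_im, Complex.sub_re, Complex.sub_im, Complex.conj_re, Complex.conj_im]
  ring

lemma le_of_sq_le_sq' {a b : ℝ} (ha : 0 ≤ a) (hb : 0 ≤ b) (h : a ^ 2 ≤ b ^ 2) : a ≤ b := by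
  have := Real.sqrt_le_sqrt h
  rwa [Real.sqrt_sq ha, Real.sqrt_sq hb] at this

lemma re_sq_le_normsq (w : ℂ) : w.re ^ 2 ≤ ‖w‖ ^ 2 := by
  simp only [Complex.sq_norm, Complex.normSq_apply]
  nlinarith [sq_nonneg w.im]

lemma isOpenHalf : IsOpen {z : ℂ | 0 < z.re} := isOpen_lt continuous_const Complex.continuous_re

/-- Key one-step estimate: dividing out a Blaschke factor preserves the bound `M`. -/
lemma blaschke_step {f : ℂ → ℂ} (hf : DifferentiableOn ℂ f {z : ℂ | 0 < z.re})
    {M : ℝ} (hM : ∀ z : ℂ, 0 < z.re → ‖f z‖ ≤ M)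
    {d : ℂ} (hd : 0 < d.re) (hfd : f d = 0) :
    ∀ z : ℂ, 0 < z.re → ‖dslope f d z * (z + (starRingEnd ℂ) d)‖ ≤ M := by
  have hM0 : 0 ≤ M := le_trans (by simp [hfd]) (hM d hd)
  set h : ℂ → ℂ := fun z => dslope f d z * (z + (starRingEnd ℂ) d) with hh
  have hmemnhds : {z : ℂ | 0 < z.re} ∈ nhds d := isOpenHalf.mem_nhds hd
  have hdiff : DifferentiableOn ℂ h {z : ℂ | 0 < z.re} :=
    ((differentiableOn_dslope hmemnhds).mpr hf).mul
      ((differentiable_id.add (differentiable_const _)).differentiableOn)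
  -- key identity : h z * (z - d) = f z * (z + conj d)
  have hiden : ∀ z : ℂ, h z * (z - d) = f z * (z + (starRingEnd ℂ) d) := by
    intro z
    have := sub_smul_dslope f d z
    rw [smul_eq_mul] at this
    rw [hh]
    simp only [hfd, sub_zero] at this
    calc dslope f d z * (z + (starRingEnd ℂ) d) * (z - d)
        = ((z - d) * dslope f d z) * (z + (starRingEnd ℂ) d) := by ring
      _ = f z * (z + (starRingEnd ℂ) d) := by rw [this]
  intro z₀ hz₀
  -- pointwise bound from frontier bound
  have key : ∀ δ : ℝ, 0 < δ → ‖h z₀‖ ≤ M * (1 + δ) := by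
    intro δ hδ
    set a := d.re with ha
    set η : ℝ := min (z₀.re / 2) (min (a / 2) (δ * a / 8)) with hη
    have hη0 : 0 < η := by
      apply lt_min (by linarith) (lt_min (by linarith) (by positivity))
    have hηa2 : η ≤ a / 2 := le_trans (min_le_right _ _) (min_le_left _ _)
    have hηδ : η ≤ δ * a / 8 := le_trans (min_le_right _ _) (min_le_right _ _)
    have hηz : η < z₀.re := lt_of_le_of_lt (min_le_left _ _) (by linarith)
    set R : ℝ := max (‖z₀‖ + 1) (max (‖d‖ + 1) (‖d‖ * (2 + δ) / δ + 1)) with hR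
    have hRz : ‖z₀‖ < R := lt_of_lt_of_le (by linarith) (le_max_left _ _)
    have hRd : ‖d‖ < R :=
      lt_of_lt_of_le (by linarith) (le_trans (le_max_left _ _) (le_max_right _ _))
    have hRδ : ‖d‖ * (2 + δ) / δ ≤ R :=
      le_trans (by linarith) (le_trans (le_max_right _ _) (le_max_right _ _))
    have hR0 : 0 < R := lt_of_le_of_lt (norm_nonneg d) hRd
    set U : Set ℂ := {z : ℂ | η < z.re} ∩ ball (0 : ℂ) R with hU
    have hUbd : Bornology.IsBounded U := isBounded_ball.subset inter_subset_right
    have hclos : closure U ⊆ {z : ℂ | 0 < z.re} := by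
      refine subset_trans (closure_inter_subset_inter_closure _ _) ?_
      intro z hz
      have h1 : z ∈ closure {z : ℂ | η < z.re} := hz.1
      rw [Complex.closure_setOf_lt_re] at h1
      exact lt_of_lt_of_le hη0 h1
    have hdc : DiffContOnCl ℂ h U := DifferentiableOn.diffContOnCl (hdiff.mono hclos)
    -- frontier bound
    have hfr : ∀ z ∈ frontier U, ‖h z‖ ≤ M * (1 + δ) := by
      intro z hz
      have hz' := frontier_inter_subset _ _ hz
      -- establish: z in right half plane, z ≠ d, and norm ineq
      have main : 0 < z.re ∧ z ≠ d ∧ ‖z + (starRingEnd ℂ) d‖ ≤ (1 + δ) * ‖z - d‖ := by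
        rcases hz' with ⟨hz1, _⟩ | ⟨hz1, hz2⟩
        · -- z.re = η
          rw [Complex.frontier_setOf_lt_re] at hz1
          have hzre : z.re = η := hz1
          have hz0 : 0 < z.re := by rw [hzre]; exact hη0
          have hzd : z ≠ d := by
            intro hzd; rw [hzd] at hzre; rw [← ha] at hzre; linarith [hηa2, hη0]
          refine ⟨hz0, hzd, ?_⟩
          apply le_of_sq_le_sq' (norm_nonneg _) (by positivity)
          rw [mul_pow, normsq_key]
          have h1 : (z.re - d.re) ^ 2 ≤ ‖z - d‖ ^ 2 := by
            have := re_sq_le_normsq (z - d); simpa using this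
          have h2 : (a / 2) ^ 2 ≤ (z.re - d.re) ^ 2 := by
            rw [hzre, ← ha]
            nlinarith [hη0, hηa2, hd]
          have h3 : 4 * z.re * d.re ≤ δ * a ^ 2 / 2 := by
            rw [hzre, ← ha]
            nlinarith [hd, hδ]
          have h4 : (a / 2) ^ 2 ≤ ‖z - d‖ ^ 2 := le_trans h2 h1
          nlinarith [mul_nonneg hδ.le (sub_nonneg.mpr h4),
            mul_nonneg (mul_nonneg hδ.le hδ.le) (sq_nonneg ‖z - d‖)]
        · -- sphere case
          rw [frontier_ball (0 : ℂ) hR0.ne'] at hz2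
          have hznorm : ‖z‖ = R := by simpa using hz2
          have hz1' : z ∈ closure {z : ℂ | η < z.re} := hz1
          rw [Complex.closure_setOf_lt_re] at hz1'
          have hz0 : 0 < z.re := lt_of_lt_of_le hη0 hz1'
          have hzd : z ≠ d := by
            intro hzd; rw [hzd] at hznorm; exact absurd hznorm (ne_of_lt hRd)
          refine ⟨hz0, hzd, ?_⟩
          have e1 : ‖z + (starRingEnd ℂ) d‖ ≤ R + ‖d‖ := by
            calc ‖z + (starRingEnd ℂ) d‖ ≤ ‖z‖ + ‖(starRingEnd ℂ) d‖ := norm_add_le _ _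
              _ = R + ‖d‖ := by rw [hznorm, RCLike.norm_conj]
          have e2 : R - ‖d‖ ≤ ‖z - d‖ := by
            have := norm_sub_norm_le z d; rw [hznorm] at this; linarith
          have e3 : R + ‖d‖ ≤ (1 + δ) * (R - ‖d‖) := by
            rw [div_le_iff₀ hδ] at hRδ
            nlinarith [hδ]
          calc ‖z + (starRingEnd ℂ) d‖ ≤ R + ‖d‖ := e1
            _ ≤ (1 + δ) * (R - ‖d‖) := e3
            _ ≤ (1 + δ) * ‖z - d‖ := by nlinarith [hδ]
      obtain ⟨hz0, hzd, hineq⟩ := main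
      have hzdpos : 0 < ‖z - d‖ := by
        rw [norm_pos_iff]; exact sub_ne_zero_of_ne hzd
      have : ‖h z‖ * ‖z - d‖ ≤ M * (1 + δ) * ‖z - d‖ := by
        calc ‖h z‖ * ‖z - d‖ = ‖h z * (z - d)‖ := (norm_mul _ _).symm
          _ = ‖f z * (z + (starRingEnd ℂ) d)‖ := by rw [hiden]
          _ = ‖f z‖ * ‖z + (starRingEnd ℂ) d‖ := norm_mul _ _
          _ ≤ M * ((1 + δ) * ‖z - d‖) := by
              apply mul_le_mul (hM z hz0) hineq (norm_nonneg _) hM0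
          _ = M * (1 + δ) * ‖z - d‖ := by ring
      exact le_of_mul_le_mul_right this hzdpos
    have hz₀U : z₀ ∈ U := ⟨hηz, by simpa [mem_ball, dist_eq_norm] using hRz⟩
    exact norm_le_of_forall_mem_frontier_norm_le hUbd hdc hfr (subset_closure hz₀U)
  -- conclude
  apply le_of_forall_pos_le_add
  intro ε hε
  have hδ : 0 < ε / (M + 1) := by positivity
  have := key _ hδ
  have hM1 : M / (M + 1) ≤ 1 := by
    rw [div_le_one (by linarith)]; linarith
  calc ‖h z₀‖ ≤ M * (1 + ε / (M + 1)) := this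
    _ = M + (M / (M + 1)) * ε := by field_simp
    _ ≤ M + 1 * ε := by nlinarith [hε]
    _ = M + ε := by ring

/-- Iterated division of Blaschke factors. -/
noncomputable def bIter (f : ℂ → ℂ) (d : ℕ → ℂ) : ℕ → ℂ → ℂ
  | 0 => f
  | n + 1 => fun z => dslope (bIter f d n) (d n) z * (z + (starRingEnd ℂ) (d n))

theorem vanish_of_blaschke (f : ℂ → ℂ)
    (hf : DifferentiableOn ℂ f {z : ℂ | 0 < z.re})
    (hbd : ∃ M : ℝ, ∀ z : ℂ, 0 < z.re → ‖f z‖ ≤ M)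
    (d : ℕ → ℂ) (hinj : Function.Injective d)
    (hre : ∀ n, 0 < (d n).re)
    (hinf : ∃ ε : ℝ, 0 < ε ∧ ∀ n, ε ≤ ‖d n‖)
    (hdiv : ¬ Summable fun n => ((d n)⁻¹).re)
    (hzero : ∀ n, f (d n) = 0) :
    ∀ z : ℂ, 0 < z.re → f z = 0 := by
  obtain ⟨M, hM⟩ := hbd
  obtain ⟨ε, hε, hεd⟩ := hinf
  have hM0 : 0 ≤ M := le_trans (by simp [hzero 0]) (hM (d 0) (hre 0))
  -- invariants of the iteration
  have hmain : ∀ n, DifferentiableOn ℂ (bIter f d n) {z : ℂ | 0 < z.re} ∧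
      (∀ z : ℂ, 0 < z.re → ‖bIter f d n z‖ ≤ M) ∧
      (∀ j, n ≤ j → bIter f d n (d j) = 0) := by
    intro n
    induction n with
    | zero => exact ⟨hf, hM, fun j _ => hzero j⟩
    | succ n ih =>
      obtain ⟨ihd, ihM, ihz⟩ := ih
      have hdn := hre n
      have hz : bIter f d n (d n) = 0 := ihz n le_rfl
      refine ⟨?_, ?_, ?_⟩
      · exact ((differentiableOn_dslope (isOpenHalf.mem_nhds hdn)).mpr ihd).mul
          ((differentiable_id.add (differentiable_const _)).differentiableOn)
      · exact blaschke_step ihd ihM hdn hz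
      · intro j hj
        have hne : d j ≠ d n := fun h => (Nat.succ_le_iff.mp hj).ne' (hinj h)
        show dslope (bIter f d n) (d n) (d j) * _ = 0
        rw [dslope_of_ne _ hne]
        simp [slope, hz, ihz j (Nat.le_of_succ_le hj)]
  -- product identity
  have hprodid : ∀ (N : ℕ) (z : ℂ),
      bIter f d N z * ∏ k ∈ Finset.range N, (z - d k)
        = f z * ∏ k ∈ Finset.range N, (z + (starRingEnd ℂ) (d k)) := by
    intro N z
    induction N with
    | zero => simp [bIter]
    | succ N ih =>
      rw [Finset.prod_range_succ, Finset.prod_range_succ]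
      have hz : bIter f d N (d N) = 0 := (hmain N).2.2 N le_rfl
      have hds : (z - d N) * dslope (bIter f d N) (d N) z = bIter f d N z := by
        have := sub_smul_dslope (bIter f d N) (d N) z
        rw [smul_eq_mul, hz, sub_zero] at this
        exact this
      show dslope (bIter f d N) (d N) z * (z + (starRingEnd ℂ) (d N)) *
          ((∏ k ∈ Finset.range N, (z - d k)) * (z - d N)) = _
      calc dslope (bIter f d N) (d N) z * (z + (starRingEnd ℂ) (d N)) *
              ((∏ k ∈ Finset.range N, (z - d k)) * (z - d N))
          = ((z - d N) * dslope (bIter f d N) (d N) z) *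
              (∏ k ∈ Finset.range N, (z - d k)) * (z + (starRingEnd ℂ) (d N)) := by ring
        _ = (bIter f d N z * ∏ k ∈ Finset.range N, (z - d k)) *
              (z + (starRingEnd ℂ) (d N)) := by rw [hds]
        _ = (f z * ∏ k ∈ Finset.range N, (z + (starRingEnd ℂ) (d k))) *
              (z + (starRingEnd ℂ) (d N)) := by rw [ih]
        _ = f z * ((∏ k ∈ Finset.range N, (z + (starRingEnd ℂ) (d k))) *
              (z + (starRingEnd ℂ) (d N))) := by ring
  -- main estimate
  intro z₀ hz₀
  set x := z₀.re with hx
  set p : ℕ → ℝ := fun k => ‖z₀ + (starRingEnd ℂ) (d k)‖ with hp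
  have hppos : ∀ k, 0 < p k := by
    intro k
    have h1 : 0 < (z₀ + (starRingEnd ℂ) (d k)).re := by
      simp only [Complex.add_re, Complex.conj_re]
      have := hre k; linarith
    calc (0:ℝ) < (z₀ + (starRingEnd ℂ) (d k)).re := h1
      _ ≤ |(z₀ + (starRingEnd ℂ) (d k)).re| := le_abs_self _
      _ ≤ ‖z₀ + (starRingEnd ℂ) (d k)‖ := Complex.abs_re_le_norm _
  set s : ℕ → ℝ := fun k => 4 * x * (d k).re / p k ^ 2 with hs
  have hspos : ∀ k, 0 < s k := fun k => by
    have := hre k; have := hppos k; positivity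
  -- single factor bound
  have hfac : ∀ k, ‖z₀ - d k‖ ≤ p k * Real.exp (-(s k) / 2) := by
    intro k
    apply le_of_sq_le_sq' (norm_nonneg _) (by positivity)
    have hkey := normsq_key z₀ (d k)
    have hexp : (1 : ℝ) - s k ≤ Real.exp (-(s k)) := by
      have := Real.add_one_le_exp (-(s k)); linarith
    have hpk := hppos k
    have he2 : (p k * Real.exp (-(s k) / 2)) ^ 2 = p k ^ 2 * Real.exp (-(s k)) := by
      rw [mul_pow]
      congr 1
      rw [sq, ← Real.exp_add]
      congr 1
      ring
    rw [he2]
    have hkey' : p k ^ 2 = ‖z₀ - d k‖ ^ 2 + 4 * x * (d k).re := normsq_key z₀ (d k)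
    have hsk : p k ^ 2 * s k = 4 * x * (d k).re := by
      rw [hs]
      field_simp
    have h1 : ‖z₀ - d k‖ ^ 2 = p k ^ 2 * (1 - s k) := by
      have : p k ^ 2 * (1 - s k) = p k ^ 2 - p k ^ 2 * s k := by ring
      rw [this, hsk]
      linarith [hkey']
    rw [h1]
    have h2 : p k ^ 2 * (1 - s k) ≤ p k ^ 2 * Real.exp (-(s k)) := by
      apply mul_le_mul_of_nonneg_left hexp (by positivity)
    exact h2
  -- bound for f z₀
  have hbound : ∀ N : ℕ, ‖f z₀‖ ≤ M * Real.exp (-(∑ k ∈ Finset.range N, s k) / 2) := by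
    intro N
    have hid := hprodid N z₀
    have hnorm : ‖f z₀‖ * ∏ k ∈ Finset.range N, p k
        = ‖bIter f d N z₀‖ * ∏ k ∈ Finset.range N, ‖z₀ - d k‖ := by
      rw [hp]
      calc ‖f z₀‖ * ∏ k ∈ Finset.range N, ‖z₀ + (starRingEnd ℂ) (d k)‖
          = ‖f z₀ * ∏ k ∈ Finset.range N, (z₀ + (starRingEnd ℂ) (d k))‖ := by
            rw [norm_mul, norm_prod]
        _ = ‖bIter f d N z₀ * ∏ k ∈ Finset.range N, (z₀ - d k)‖ := by rw [hid]
        _ = ‖bIter f d N z₀‖ * ∏ k ∈ Finset.range N, ‖z₀ - d k‖ := by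
            rw [norm_mul, norm_prod]
    have hP : 0 < ∏ k ∈ Finset.range N, p k := Finset.prod_pos fun k _ => hppos k
    have hprodle : ∏ k ∈ Finset.range N, ‖z₀ - d k‖
        ≤ (∏ k ∈ Finset.range N, p k) * Real.exp (-(∑ k ∈ Finset.range N, s k) / 2) := by
      calc ∏ k ∈ Finset.range N, ‖z₀ - d k‖
          ≤ ∏ k ∈ Finset.range N, (p k * Real.exp (-(s k) / 2)) :=
            Finset.prod_le_prod (fun k _ => norm_nonneg _) (fun k _ => hfac k)
        _ = (∏ k ∈ Finset.range N, p k) * ∏ k ∈ Finset.range N, Real.exp (-(s k) / 2) :=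
            Finset.prod_mul_distrib
        _ = (∏ k ∈ Finset.range N, p k) * Real.exp (∑ k ∈ Finset.range N, (-(s k) / 2)) := by
            rw [Real.exp_sum]
        _ = (∏ k ∈ Finset.range N, p k) * Real.exp (-(∑ k ∈ Finset.range N, s k) / 2) := by
            rw [← Finset.sum_div, ← Finset.sum_neg_distrib]
    have : ‖f z₀‖ * ∏ k ∈ Finset.range N, p k
        ≤ M * ((∏ k ∈ Finset.range N, p k) * Real.exp (-(∑ k ∈ Finset.range N, s k) / 2)) := by
      rw [hnorm]
      calc ‖bIter f d N z₀‖ * ∏ k ∈ Finset.range N, ‖z₀ - d k‖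
          ≤ M * ∏ k ∈ Finset.range N, ‖z₀ - d k‖ :=
            mul_le_mul_of_nonneg_right ((hmain N).2.1 z₀ hz₀)
              (Finset.prod_nonneg fun k _ => norm_nonneg _)
        _ ≤ M * ((∏ k ∈ Finset.range N, p k) *
              Real.exp (-(∑ k ∈ Finset.range N, s k) / 2)) :=
            mul_le_mul_of_nonneg_left hprodle hM0
    have this2 : ‖f z₀‖ * ∏ k ∈ Finset.range N, p k
        ≤ (M * Real.exp (-(∑ k ∈ Finset.range N, s k) / 2)) * ∏ k ∈ Finset.range N, p k := by
      calc ‖f z₀‖ * ∏ k ∈ Finset.range N, p k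
          ≤ M * ((∏ k ∈ Finset.range N, p k) *
              Real.exp (-(∑ k ∈ Finset.range N, s k) / 2)) := this
        _ = (M * Real.exp (-(∑ k ∈ Finset.range N, s k) / 2)) * ∏ k ∈ Finset.range N, p k := by
            ring
    exact le_of_mul_le_mul_right this2 hP
  -- divergence of partial sums of s
  have hrpos : ∀ k, 0 ≤ ((d k)⁻¹).re := by
    intro k
    rw [Complex.inv_re]
    have := hre k
    have := Complex.normSq_nonneg (d k)
    positivity
  have hTdiv : Tendsto (fun N => ∑ k ∈ Finset.range N, ((d k)⁻¹).re) atTop atTop := by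
    by_contra h
    exact hdiv ((summable_iff_not_tendsto_nat_atTop_of_nonneg hrpos).mpr h)
  set C : ℝ := ‖z₀‖ / ε + 1 with hC
  have hC0 : 0 < C := by positivity
  set c : ℝ := 4 * x / C ^ 2 with hc
  have hc0 : 0 < c := by rw [hc]; positivity
  have hslb : ∀ k, c * ((d k)⁻¹).re ≤ s k := by
    intro k
    have hdk := hre k
    have hεk := hεd k
    have hdknorm : 0 < ‖d k‖ := lt_of_lt_of_le hε hεk
    have hpk : p k ≤ C * ‖d k‖ := by
      rw [hp, hC]
      calc ‖z₀ + (starRingEnd ℂ) (d k)‖ ≤ ‖z₀‖ + ‖(starRingEnd ℂ) (d k)‖ := norm_add_le _ _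
        _ = ‖z₀‖ + ‖d k‖ := by rw [RCLike.norm_conj]
        _ ≤ (‖z₀‖ / ε) * ‖d k‖ + ‖d k‖ := by
            have : ‖z₀‖ ≤ (‖z₀‖ / ε) * ‖d k‖ := by
              rw [div_mul_eq_mul_div, le_div_iff₀ hε]
              exact mul_le_mul_of_nonneg_left hεk (norm_nonneg _)
            linarith
        _ = (‖z₀‖ / ε + 1) * ‖d k‖ := by ring
    have hre' : ((d k)⁻¹).re = (d k).re / ‖d k‖ ^ 2 := by
      rw [Complex.inv_re, Complex.normSq_eq_norm_sq]
    have hpk2 : p k ^ 2 ≤ C ^ 2 * ‖d k‖ ^ 2 := by nlinarith [hppos k, hpk, hC0.le]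
    rw [hre', hc]
    show 4 * x / C ^ 2 * ((d k).re / ‖d k‖ ^ 2) ≤ 4 * x * (d k).re / p k ^ 2
    rw [div_mul_div_comm]
    have heq : 4 * x * ((d k).re) = 4 * x * (d k).re := rfl
    gcongr 4 * x * (d k).re / ?_
    all_goals first
      | exact pow_pos (hppos k) 2
      | exact hpk2
      | positivity
  have hSdiv : Tendsto (fun N => ∑ k ∈ Finset.range N, s k) atTop atTop := by
    apply tendsto_atTop_mono (fun N => ?_) (hTdiv.const_mul_atTop hc0)
    calc c * ∑ k ∈ Finset.range N, ((d k)⁻¹).re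
        = ∑ k ∈ Finset.range N, c * ((d k)⁻¹).re := by rw [Finset.mul_sum]
      _ ≤ ∑ k ∈ Finset.range N, s k := Finset.sum_le_sum fun k _ => hslb k
  have hexp0 : Tendsto (fun N => M * Real.exp (-(∑ k ∈ Finset.range N, s k) / 2))
      atTop (nhds 0) := by
    have h1 : Tendsto (fun N => -(∑ k ∈ Finset.range N, s k) / 2) atTop atBot := by
      apply Tendsto.atBot_div_const two_pos
      exact tendsto_neg_atTop_atBot.comp hSdiv
    have h2 := Real.tendsto_exp_atBot.comp h1
    have := h2.const_mul M
    simpa using this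
  have hfinal : ‖f z₀‖ ≤ 0 := ge_of_tendsto' hexp0 hbound
  simpa using le_antisymm hfinal (norm_nonneg _)
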